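/- Let $S$ be a commutative ring and $a_1,\ldots,a_m$ elements forming a permutable regular sequence on $S$. If $J$ is an ideal generated by monomials in $a_{t+1},\ldots,a_m$ for some $1 \le t \le m-1$, then $(J : a_1^{n_1} a_2^{n_2} \cdots a_t^{n_t}) = J$ for all natural numbers $n_1,\ldots,n_t$. -/

import Mathlib

open Ideal Finset

namespace Stmt1Aux

variable {S : Type*} [CommRing S] {m : ℕ}

def mono (a : Fin m → S) (c : Fin m → ℕ) : S := ∏ j, a j ^ c j
def deg (c : Fin m → ℕ) : ℕ := ∑ j, c j
def pgen (a : Fin m → S) (u : Fin m → ℕ) : Fin m → S :=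
  fun j => if u j = 0 then 0 else a j ^ u j
def PU (a : Fin m → S) (u : Fin m → ℕ) : Ideal S := Ideal.span (Set.range (pgen a u))
def degL (L : List (Fin m → ℕ)) : ℕ := (L.map deg).sum
def JI (a : Fin m → S) (L : List (Fin m → ℕ)) (u : Fin m → ℕ) : Ideal S :=
  Ideal.span (Set.range (fun i : Fin L.length => mono a (L.get i))) ⊔ PU a u
def red (v : Fin m) (c : Fin m → ℕ) : Fin m → ℕ := Function.update c v 0
def decr (v : Fin m) (c : Fin m → ℕ) : Fin m → ℕ := Function.update c v (c v - 1)

variable {a : Fin m → S}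

lemma pgen_mem_PU (u : Fin m → ℕ) (j : Fin m) : pgen a u j ∈ PU a u :=
  Ideal.subset_span ⟨j, rfl⟩

lemma pow_mem_PU {u : Fin m → ℕ} {j : Fin m} (h : u j ≠ 0) : a j ^ u j ∈ PU a u := by
  have := pgen_mem_PU (a := a) u j
  rwa [pgen, if_neg h] at this

lemma PU_le_JI (L : List (Fin m → ℕ)) (u : Fin m → ℕ) : PU a u ≤ JI a L u := le_sup_right

lemma pgen_mem (L : List (Fin m → ℕ)) (u : Fin m → ℕ) (j : Fin m) :
    pgen a u j ∈ JI a L u := PU_le_JI L u (pgen_mem_PU u j)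

lemma pow_mem {L : List (Fin m → ℕ)} {u : Fin m → ℕ} {j : Fin m} (h : u j ≠ 0) :
    a j ^ u j ∈ JI a L u := PU_le_JI L u (pow_mem_PU h)

lemma mono_mem {L : List (Fin m → ℕ)} {u : Fin m → ℕ} {c : Fin m → ℕ} (h : c ∈ L) :
    mono a c ∈ JI a L u := by
  obtain ⟨i, hi⟩ := List.mem_iff_get.1 h
  exact le_sup_left (α := Ideal S) (Ideal.subset_span ⟨i, by simp [← hi, List.get_eq_getElem]⟩)

lemma mem_JI_iff {L : List (Fin m → ℕ)} {u : Fin m → ℕ} {x : S} :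
    x ∈ JI a L u ↔ ∃ (r : Fin L.length → S) (s : Fin m → S),
      x = (∑ i, r i * mono a (L.get i)) + ∑ j, s j * pgen a u j := by
  constructor
  · intro hx
    obtain ⟨y, hy, z, hz, rfl⟩ := Submodule.mem_sup.1 hx
    obtain ⟨r, hr⟩ := Ideal.mem_span_range_iff_exists_fun.1 hy
    obtain ⟨s, hs⟩ := Ideal.mem_span_range_iff_exists_fun.1 hz
    exact ⟨r, s, by rw [hr, hs]⟩
  · rintro ⟨r, s, rfl⟩
    refine add_mem (Ideal.sum_mem _ fun i _ => ?_) (Ideal.sum_mem _ fun j _ => ?_)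
    · exact Ideal.mul_mem_left _ _ (mono_mem (by rw [List.get_eq_getElem]; exact L.getElem_mem i.isLt))
    · exact Ideal.mul_mem_left _ _ (pgen_mem L u j)

lemma JI_le {L : List (Fin m → ℕ)} {u : Fin m → ℕ} {K : Ideal S}
    (h1 : ∀ c ∈ L, mono a c ∈ K) (h2 : ∀ j, u j ≠ 0 → a j ^ u j ∈ K) :
    JI a L u ≤ K := by
  refine sup_le (Ideal.span_le.2 ?_) (Ideal.span_le.2 ?_)
  · rintro _ ⟨i, rfl⟩; exact h1 _ (by rw [List.get_eq_getElem]; exact L.getElem_mem i.isLt)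
  · rintro _ ⟨j, rfl⟩
    by_cases h : u j = 0
    · simp [pgen, h]
    · rw [pgen, if_neg h]; exact h2 j h

lemma mono_split (v : Fin m) (c : Fin m → ℕ) :
    mono a c = a v ^ c v * mono a (Function.update c v 0) := by
  rw [mono, mono, ← Finset.mul_prod_erase Finset.univ _ (Finset.mem_univ v),
    ← Finset.mul_prod_erase Finset.univ (fun j => a j ^ Function.update c v 0 j)
      (Finset.mem_univ v)]
  simp only [Function.update_self, pow_zero, one_mul]
  congr 1
  refine Finset.prod_congr rfl fun j hj => ?_
  rw [Function.update_of_ne (Finset.ne_of_mem_erase hj)]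

lemma mono_update (v : Fin m) (c : Fin m → ℕ) (e : ℕ) :
    mono a (Function.update c v e) = a v ^ e * mono a (Function.update c v 0) := by
  rw [mono_split v (Function.update c v e), Function.update_idem, Function.update_self]

lemma deg_update0 (v : Fin m) (c : Fin m → ℕ) :
    deg (Function.update c v 0) + c v = deg c := by
  rw [deg, deg, Finset.sum_update_of_mem (Finset.mem_univ v), zero_add,
    ← Finset.add_sum_erase Finset.univ c (Finset.mem_univ v), add_comm,
    Finset.sdiff_singleton_eq_erase]

lemma deg_eq_zero_iff {c : Fin m → ℕ} : deg c = 0 ↔ ∀ j, c j = 0 := by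
  simp [deg, Finset.sum_eq_zero_iff]

lemma mono_of_deg_zero {c : Fin m → ℕ} (h : deg c = 0) : mono a c = 1 := by
  rw [mono]
  exact Finset.prod_eq_one fun j _ => by rw [deg_eq_zero_iff.1 h j, pow_zero]

lemma degL_cons (c : Fin m → ℕ) (L : List (Fin m → ℕ)) :
    degL (c :: L) = deg c + degL L := by simp [degL]

lemma degL_filter_le (p : (Fin m → ℕ) → Bool) (L : List (Fin m → ℕ)) :
    degL (L.filter p) ≤ degL L := by
  induction L with
  | nil => simp [degL]
  | cons c L ih =>
    rw [List.filter_cons]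
    by_cases h : p c
    · simp only [h, if_true, degL_cons]; omega
    · simp only [h, if_false, degL_cons, Bool.false_eq_true]; omega

lemma degL_filter_add {p : (Fin m → ℕ) → Bool} {L : List (Fin m → ℕ)} {c : Fin m → ℕ}
    (hc : c ∈ L) (hpc : ¬ p c) : degL (L.filter p) + deg c ≤ degL L := by
  induction L with
  | nil => simp at hc
  | cons c' L ih =>
    rw [List.filter_cons, degL_cons]
    rcases List.mem_cons.1 hc with rfl | hc
    · simp only [hpc, if_false, Bool.false_eq_true]
      have := degL_filter_le p L
      omega
    · by_cases h : p c'
      · simp only [h, if_true, degL_cons]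
        have := ih hc
        omega
      · simp only [h, if_false, Bool.false_eq_true]
        have := ih hc
        omega

lemma degL_map_le {f : (Fin m → ℕ) → (Fin m → ℕ)} (hf : ∀ c, deg (f c) ≤ deg c)
    (L : List (Fin m → ℕ)) : degL (L.map f) ≤ degL L := by
  induction L with
  | nil => simp [degL]
  | cons c L ih => simp only [List.map_cons, degL_cons]; have := hf c; omega

lemma degL_map_add {f : (Fin m → ℕ) → (Fin m → ℕ)} (hf : ∀ c, deg (f c) ≤ deg c)
    {L : List (Fin m → ℕ)} {c : Fin m → ℕ} (hc : c ∈ L) (hcf : deg (f c) + 1 ≤ deg c) :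
    degL (L.map f) + 1 ≤ degL L := by
  induction L with
  | nil => simp at hc
  | cons c' L ih =>
    simp only [List.map_cons, degL_cons]
    rcases List.mem_cons.1 hc with rfl | hc
    · have := degL_map_le hf L; omega
    · have := hf c'; have := ih hc; omega

lemma deg_red_add (v : Fin m) (c : Fin m → ℕ) : deg (red v c) + c v = deg c :=
  deg_update0 v c

lemma deg_decr (v : Fin m) (c : Fin m → ℕ) : deg (decr v c) + min (c v) 1 = deg c := by
  have h1 : deg (Function.update c v 0) + c v = deg c := deg_update0 v c
  have h2 : deg (Function.update (Function.update c v (c v - 1)) v 0) +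
      (Function.update c v (c v - 1)) v = deg (Function.update c v (c v - 1)) :=
    deg_update0 v _
  rw [Function.update_idem, Function.update_self] at h2
  rw [decr]
  omega

def maxExp (v : Fin m) (L : List (Fin m → ℕ)) : ℕ := (L.map (fun c => c v)).foldr max 0

lemma le_maxExp {v : Fin m} {L : List (Fin m → ℕ)} {c : Fin m → ℕ} (hc : c ∈ L) :
    c v ≤ maxExp v L := by
  induction L with
  | nil => simp at hc
  | cons c' L ih =>
    simp only [maxExp, List.map_cons, List.foldr_cons]
    rcases List.mem_cons.1 hc with rfl | hc
    · exact le_max_left _ _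
    · exact le_trans (ih hc) (le_max_right _ _)

lemma maxExp_attained {v : Fin m} {L : List (Fin m → ℕ)} (h : maxExp v L ≠ 0) :
    ∃ c ∈ L, c v = maxExp v L := by
  induction L with
  | nil => simp [maxExp] at h
  | cons c' L ih =>
    simp only [maxExp, List.map_cons, List.foldr_cons] at h ⊢
    rcases Nat.le_total (c' v) (maxExp v L) with hle | hle
    · rw [show max (c' v) (List.foldr max 0 (List.map (fun c => c v) L)) =
          maxExp v L from Nat.max_eq_right hle] at h ⊢
      obtain ⟨c, hc, hcv⟩ := ih h
      exact ⟨c, List.mem_cons_of_mem _ hc, hcv⟩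
    · rw [show max (c' v) (List.foldr max 0 (List.map (fun c => c v) L)) =
          c' v from Nat.max_eq_left hle]
      exact ⟨c', List.mem_cons_self, rfl⟩

variable {S : Type*} [CommRing S] {m : ℕ} {a : Fin m → S}

lemma hsub_of_hreg
    (hreg : ∀ σ : Equiv.Perm (Fin m), ∀ i : Fin m, ∀ s : S,
      a (σ i) * s ∈ Ideal.span {x | ∃ j : Fin m, j < i ∧ x = a (σ j)} →
      s ∈ Ideal.span {x | ∃ j : Fin m, j < i ∧ x = a (σ j)}) :
    ∀ T : Finset (Fin m), ∀ k, k ∉ T → ∀ s : S,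
      a k * s ∈ Ideal.span (a '' ↑T) → s ∈ Ideal.span (a '' ↑T) := by
  intro T k hk s hs
  classical
  set l : List (Fin m) := T.sort (· ≤ ·) ++ k :: ((univ \ insert k T).sort (· ≤ ·)) with hl
  have hcard : T.card + 1 ≤ m := by
    have := Finset.card_le_univ (insert k T)
    rw [Finset.card_insert_of_notMem hk] at this
    simpa using this
  have hlen : l.length = m := by
    have h1 : (T.sort (· ≤ ·)).length = T.card := Finset.length_sort _
    have h2 : ((univ \ insert k T).sort (· ≤ ·)).length = (univ \ insert k T).card :=
      Finset.length_sort _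
    have h3 : (univ \ insert k T).card = m - (T.card + 1) := by
      rw [Finset.card_sdiff_of_subset (Finset.subset_univ _), Finset.card_insert_of_notMem hk,
        Finset.card_univ, Fintype.card_fin]
    simp only [hl, List.length_append, List.length_cons, h1, h2, h3]
    omega
  have hnodup : l.Nodup := by
    rw [hl]
    refine List.Nodup.append (Finset.sort_nodup _ _) ?_ ?_
    · refine List.nodup_cons.2 ⟨?_, Finset.sort_nodup _ _⟩
      intro hkmem
      have := (Finset.mem_sort _).1 hkmem
      simp at this
    · intro x hx1 hx2
      have hxT : x ∈ T := (Finset.mem_sort _).1 hx1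
      rcases List.mem_cons.1 hx2 with rfl | hx3
      · exact hk hxT
      · have := (Finset.mem_sort _).1 hx3
        simp [hxT] at this
  have hgetinj : Function.Injective l.get := List.nodup_iff_injective_get.1 hnodup
  set f : Fin m → Fin m := fun i => l.get (Fin.cast hlen.symm i) with hf
  have hfinj : Function.Injective f := by
    intro i j hij
    have := hgetinj hij
    simpa [Fin.ext_iff] using this
  set σ : Equiv.Perm (Fin m) := Equiv.ofBijective f (Finite.injective_iff_bijective.1 hfinj)
    with hσ
  have hσval : ∀ i : Fin m, σ i = f i := fun i => rfl
  have hic : T.card < m := by omega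
  set i₀ : Fin m := ⟨T.card, hic⟩ with hi₀
  have hTlen : (T.sort (· ≤ ·)).length = T.card := Finset.length_sort _
  have hget : ∀ i : Fin m, σ i = l[(i : ℕ)]'(by omega) := fun i => rfl
  have hσi₀ : σ i₀ = k := by
    rw [hget]
    show l[T.card]'_ = k
    rw [List.getElem_of_eq hl, List.getElem_append_right (by simp [hTlen])]
    simp [hTlen]
  have hslt : ∀ j : Fin m, j < i₀ → σ j ∈ T := by
    intro j hj
    have hjc : (j : ℕ) < T.card := hj
    rw [hget]
    rw [List.getElem_of_eq hl, List.getElem_append_left (by simp [hTlen]; omega)]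
    exact (Finset.mem_sort _).1 (List.getElem_mem _)
  have hsurj : ∀ x ∈ T, ∃ j : Fin m, j < i₀ ∧ σ j = x := by
    intro x hx
    have hxs : x ∈ T.sort (· ≤ ·) := (Finset.mem_sort _).2 hx
    obtain ⟨n, hn, hnx⟩ := List.mem_iff_getElem.1 hxs
    rw [hTlen] at hn
    refine ⟨⟨n, by omega⟩, by simpa [hi₀, Fin.lt_def] using hn, ?_⟩
    rw [hget]
    show l[n]'_ = x
    rw [List.getElem_of_eq hl, List.getElem_append_left (by simp [hTlen]; omega)]
    exact hnx
  have hset : {x | ∃ j : Fin m, j < i₀ ∧ x = a (σ j)} = a '' ↑T := by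
    ext x
    constructor
    · rintro ⟨j, hj, rfl⟩
      exact ⟨σ j, hslt j hj, rfl⟩
    · rintro ⟨tt, htt, rfl⟩
      obtain ⟨j, hj, hjeq⟩ := hsurj tt htt
      exact ⟨j, hj, by rw [hjeq]⟩
  have := hreg σ i₀ s
  rw [hset, hσi₀] at this
  exact this hs

lemma PU_le {u : Fin m → ℕ} {K : Ideal S} (h : ∀ j, u j ≠ 0 → a j ^ u j ∈ K) :
    PU a u ≤ K := by
  rw [PU, Ideal.span_le]
  rintro _ ⟨j, rfl⟩
  by_cases hj : u j = 0
  · simp [pgen, hj]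
  · rw [pgen, if_neg hj]; exact h j hj

lemma mem_PU_iff {u : Fin m → ℕ} {x : S} :
    x ∈ PU a u ↔ ∃ s : Fin m → S, ∑ j, s j * pgen a u j = x :=
  Ideal.mem_span_range_iff_exists_fun

lemma pgen_update_ne {u : Fin m → ℕ} {v j : Fin m} (h : j ≠ v) (e : ℕ) :
    pgen a (Function.update u v e) j = pgen a u j := by
  simp [pgen, Function.update_of_ne h]

lemma deg_pos_le (u : Fin m → ℕ) (v : Fin m) : u v ≤ deg u :=
  Finset.single_le_sum (f := u) (fun j _ => Nat.zero_le _) (Finset.mem_univ v)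

lemma deg_update_add (v : Fin m) (c : Fin m → ℕ) (e : ℕ) :
    deg (Function.update c v e) + c v = deg c + e := by
  rw [deg, deg, Finset.sum_update_of_mem (Finset.mem_univ v),
    ← Finset.add_sum_erase Finset.univ c (Finset.mem_univ v),
    Finset.sdiff_singleton_eq_erase]
  ring

/-- Powers of a permutable regular sequence form a permutable regular sequence. -/
lemma powP
    (Hsub : ∀ T : Finset (Fin m), ∀ k, k ∉ T → ∀ s : S,
      a k * s ∈ Ideal.span (a '' ↑T) → s ∈ Ideal.span (a '' ↑T)) :
    ∀ N : ℕ, ∀ u : Fin m → ℕ, deg u ≤ N → ∀ k, u k = 0 → ∀ x : S,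
      a k * x ∈ PU a u → x ∈ PU a u := by
  intro N
  induction N using Nat.strong_induction_on with
  | _ N IH =>
  intro u hdeg k hk x hx
  by_cases hb : ∀ j, u j ≤ 1
  · -- base case: all exponents ≤ 1
    classical
    set T : Finset (Fin m) := Finset.univ.filter (fun j => u j ≠ 0) with hT
    have hPU : PU a u = Ideal.span (a '' ↑T) := by
      apply le_antisymm
      · refine PU_le fun j hj => ?_
        have h1 : u j = 1 := by have := hb j; omega
        rw [h1, pow_one]
        exact Ideal.subset_span ⟨j, by simp [hT, hj], rfl⟩
      · rw [Ideal.span_le]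
        rintro _ ⟨j, hj, rfl⟩
        have hj' : u j ≠ 0 := by simpa [hT] using hj
        have h1 : u j = 1 := by have := hb j; omega
        have := pow_mem_PU (a := a) hj'
        rwa [h1, pow_one] at this
    rw [hPU] at hx ⊢
    exact Hsub T k (by simp [hT, hk]) x hx
  · push_neg at hb
    obtain ⟨v, hv⟩ := hb
    have hv2 : 2 ≤ u v := hv
    have hkv : k ≠ v := by intro h; rw [h] at hk; omega
    set u' : Fin m → ℕ := Function.update u v (u v - 1) with hu'
    have hle1 : PU a u ≤ PU a u' := by
      refine PU_le fun j hj => ?_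
      by_cases hjv : j = v
      · subst hjv
        have : a j ^ u j = a j ^ u' j * a j := by
          rw [hu', Function.update_self, ← pow_succ]
          congr 1; omega
        rw [this]
        exact Ideal.mul_mem_right _ _ (pow_mem_PU (by rw [hu', Function.update_self]; omega))
      · have : u' j = u j := Function.update_of_ne hjv _ _
        rw [← this]
        exact pow_mem_PU (by rw [this]; exact hj)
    have hdegu' : deg u' + 1 = deg u := by
      rw [hu']
      have := deg_update_add v u (u v - 1)
      omega
    have hdvN : deg u ≥ 2 := le_trans hv2 (deg_pos_le u v)
    have hx' : x ∈ PU a u' := by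
      refine IH (N - 1) (by omega) u' (by omega) k (by rw [hu', Function.update_of_ne hkv]; exact hk) x ?_
      exact hle1 hx
    obtain ⟨b, hbrep⟩ := mem_PU_iff.1 hx'
    obtain ⟨cc, hccrep⟩ := mem_PU_iff.1 hx
    set z : S := a k * b v - cc v * a v with hz
    set u0 : Fin m → ℕ := Function.update u v 0 with hu0
    have hpgv : pgen a u v = a v ^ u v := by rw [pgen, if_neg (by omega)]
    have hpgv' : pgen a u' v = a v ^ (u v - 1) := by
      rw [pgen, hu', Function.update_self, if_neg (by omega)]
    have key : a v ^ (u v - 1) * z = ∑ j ∈ Finset.univ.erase v,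
        (cc j - a k * b j) * pgen a u j := by
      have e1 : cc v * pgen a u v + ∑ j ∈ Finset.univ.erase v, cc j * pgen a u j
          = a k * x := by
        rw [← hccrep, ← Finset.add_sum_erase Finset.univ (fun j => cc j * pgen a u j)
          (Finset.mem_univ v)]
      have e2 : a k * (b v * pgen a u' v) + ∑ j ∈ Finset.univ.erase v,
          a k * (b j * pgen a u' j) = a k * x := by
        rw [← hbrep, Finset.mul_sum, ← Finset.add_sum_erase Finset.univ
          (fun j => a k * (b j * pgen a u' j)) (Finset.mem_univ v)]
      have e3 : ∑ j ∈ Finset.univ.erase v, a k * (b j * pgen a u' j)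
          = ∑ j ∈ Finset.univ.erase v, a k * (b j * pgen a u j) := by
        refine Finset.sum_congr rfl fun j hj => ?_
        rw [hu', pgen_update_ne (Finset.ne_of_mem_erase hj)]
      rw [e3] at e2
      have e4 : ∑ j ∈ Finset.univ.erase v, (cc j - a k * b j) * pgen a u j
          = (∑ j ∈ Finset.univ.erase v, cc j * pgen a u j)
            - ∑ j ∈ Finset.univ.erase v, a k * (b j * pgen a u j) := by
        rw [← Finset.sum_sub_distrib]
        exact Finset.sum_congr rfl fun j _ => by ring
      rw [e4]
      have hvpow : a v ^ (u v - 1) * a v = a v ^ u v := by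
        rw [← pow_succ]; congr 1; omega
      calc a v ^ (u v - 1) * z
          = a k * (b v * (a v ^ (u v - 1))) - cc v * (a v ^ (u v - 1) * a v) := by
            rw [hz]; ring
        _ = a k * (b v * pgen a u' v) - cc v * pgen a u v := by rw [hvpow, hpgv, hpgv']
        _ = (∑ j ∈ Finset.univ.erase v, cc j * pgen a u j)
            - ∑ j ∈ Finset.univ.erase v, a k * (b j * pgen a u j) := by
            linear_combination e2 - e1
    have hzPU : z ∈ PU a u0 := by
      have hsum : a v ^ (u v - 1) * z ∈ PU a u0 := by
        rw [key]
        refine Ideal.sum_mem _ fun j hj => Ideal.mul_mem_left _ _ ?_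
        have : pgen a u j = pgen a u0 j := (pgen_update_ne (Finset.ne_of_mem_erase hj) 0).symm
        rw [this]
        exact pgen_mem_PU u0 j
      have hiter : ∀ e : ℕ, ∀ y : S, a v ^ e * y ∈ PU a u0 → y ∈ PU a u0 := by
        intro e
        induction e with
        | zero => intro y hy; simpa using hy
        | succ e ihe =>
          intro y hy
          have h1 : a v ^ e * (a v * y) ∈ PU a u0 := by
            rw [show a v ^ e * (a v * y) = a v ^ (e + 1) * y by ring]
            exact hy
          have h2 := ihe _ h1
          have hdegu0 : deg u0 + u v = deg u := by
            rw [hu0]; have := deg_update_add v u 0; omega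
          exact IH (deg u0) (by omega) u0 le_rfl v (by rw [hu0, Function.update_self])
            y h2
      exact hiter _ _ hsum
    have hbv : b v ∈ PU a (Function.update u v 1) := by
      set u1 : Fin m → ℕ := Function.update u v 1 with hu1
      have hmem : a k * b v ∈ PU a u1 := by
        have h1 : a k * b v = z + cc v * a v := by rw [hz]; ring
        rw [h1]
        refine Ideal.add_mem _ ?_ ?_
        · refine (PU_le fun j hj => ?_) hzPU
          have hjv : j ≠ v := by
            intro h; rw [h, hu0, Function.update_self] at hj; exact hj rfl
          have h2 : u0 j = u1 j := by
            rw [hu0, hu1, Function.update_of_ne hjv, Function.update_of_ne hjv]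
          rw [h2]
          exact pow_mem_PU (by rw [← h2]; exact hj)
        · refine Ideal.mul_mem_left _ _ ?_
          have := pow_mem_PU (a := a) (u := u1) (j := v)
            (by rw [hu1, Function.update_self]; omega)
          rwa [hu1, Function.update_self, pow_one] at this
      have hdegu1 : deg u1 + u v = deg u + 1 := deg_update_add v u 1
      exact IH (deg u1) (by omega) u1 le_rfl k
        (by rw [hu1, Function.update_of_ne hkv]; exact hk) _ hmem
    -- final assembly
    obtain ⟨ee, heerep⟩ := mem_PU_iff.1 hbv
    have hxeq : x = (∑ j ∈ Finset.univ.erase v, b j * pgen a u j)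
        + b v * a v ^ (u v - 1) := by
      rw [← hbrep, ← Finset.add_sum_erase Finset.univ (fun j => b j * pgen a u' j)
        (Finset.mem_univ v), hpgv']
      have : ∑ j ∈ Finset.univ.erase v, b j * pgen a u' j
          = ∑ j ∈ Finset.univ.erase v, b j * pgen a u j := by
        refine Finset.sum_congr rfl fun j hj => ?_
        rw [hu', pgen_update_ne (Finset.ne_of_mem_erase hj)]
      rw [this]; ring
    rw [hxeq]
    refine Ideal.add_mem _ (Ideal.sum_mem _ fun j _ => Ideal.mul_mem_left _ _ (pgen_mem_PU u j)) ?_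
    rw [← heerep, Finset.sum_mul]
    refine Ideal.sum_mem _ fun j _ => ?_
    by_cases hjv : j = v
    · subst hjv
      have h1 : pgen a (Function.update u j 1) j = a j := by
        rw [pgen, Function.update_self, if_neg (by omega), pow_one]
      rw [h1, mul_assoc, show a j * a j ^ (u j - 1) = a j ^ u j by
        rw [← pow_succ']; congr 1; omega]
      exact Ideal.mul_mem_left _ _ (pow_mem_PU (by omega))
    · have h1 : pgen a (Function.update u v 1) j = pgen a u j := pgen_update_ne hjv 1
      rw [h1, mul_assoc, mul_comm (pgen a u j), ← mul_assoc]
      exact Ideal.mul_mem_left _ _ (pgen_mem_PU u j)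

def St1P (a : Fin m → S) (N : ℕ) : Prop :=
  ∀ (L : List (Fin m → ℕ)) (u : Fin m → ℕ) (k : Fin m) (x : S), degL L ≤ N →
    (∀ c ∈ L, c k = 0) → u k = 0 → a k * x ∈ JI a L u → x ∈ JI a L u

def StQP (a : Fin m → S) (N : ℕ) : Prop :=
  ∀ (L : List (Fin m → ℕ)) (u : Fin m → ℕ) (v : Fin m) (d : ℕ) (x : S), degL L ≤ N →
    (∀ c ∈ L, c v ≤ d) → (u v ≠ 0 → d < u v) → a v ^ d * x ∈ JI a L u →
    x ∈ JI a (L.map (red v)) (Function.update u v (u v - d))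

lemma Qpos (N : ℕ) (IH : ∀ N' < N, St1P a N' ∧ StQP a N') :
    ∀ (L : List (Fin m → ℕ)) (u : Fin m → ℕ) (v : Fin m) (d : ℕ) (x : S), degL L ≤ N →
    (∀ c ∈ L, c v ≤ d) → (u v ≠ 0 → d < u v) → 1 ≤ d → (∃ c₀ ∈ L, c₀ v ≠ 0) →
    a v ^ d * x ∈ JI a L u →
    x ∈ JI a (L.map (red v)) (Function.update u v (u v - d)) := by
  classical
  intro L u v d x hdeg hcle hult hd1 hA hx
  obtain ⟨c₀, hc₀L, hc₀v⟩ := hA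
  obtain ⟨r, s, hrep⟩ := mem_JI_iff.1 hx
  set q : Fin L.length → S :=
    fun i => if (L.get i) v = 0 then 0 else mono a (decr v (L.get i)) with hq
  set w : S := if u v = 0 then 0 else a v ^ (u v - 1) with hw
  set z : S := a v ^ (d - 1) * x - (∑ i, r i * q i) - s v * w with hz
  set u0 : Fin m → ℕ := Function.update u v 0 with hu0
  set u1 : Fin m → ℕ := Function.update u v (u v - 1) with hu1
  set LB : List (Fin m → ℕ) := L.filter (fun c => c v == 0) with hLB
  have hpow : a v * a v ^ (d - 1) = a v ^ d := by
    rw [← pow_succ']; congr 1; omega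
  have huv2 : u v ≠ 0 → 2 ≤ u v := fun h => by have := hult h; omega
  have keyz : a v * z = (∑ i, r i * (mono a (L.get i) - a v * q i))
      + ∑ j, s j * (pgen a u j - (if j = v then a v * w else 0)) := by
    have h1 : ∑ i, r i * (mono a (L.get i) - a v * q i)
        = (∑ i, r i * mono a (L.get i)) - a v * ∑ i, r i * q i := by
      rw [Finset.mul_sum, ← Finset.sum_sub_distrib]
      exact Finset.sum_congr rfl fun i _ => by ring
    have h2 : ∑ j, s j * (pgen a u j - (if j = v then a v * w else 0))
        = (∑ j, s j * pgen a u j) - s v * (a v * w) := by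
      have h3 : (∑ j, s j * (pgen a u j - (if j = v then a v * w else 0)))
          = ∑ j, (s j * pgen a u j - (if j = v then s j * (a v * w) else 0)) :=
        Finset.sum_congr rfl fun j _ => by split <;> ring
      rw [h3, Finset.sum_sub_distrib, Finset.sum_ite_eq' Finset.univ v
        (fun j => s j * (a v * w)), if_pos (Finset.mem_univ v)]
    rw [h1, h2]
    rw [← hpow] at hrep
    rw [hz]
    linear_combination hrep
  have hterm1 : ∀ i, mono a (L.get i) - a v * q i
      = if (L.get i) v = 0 then mono a (L.get i) else 0 := by
    intro i
    have hqi : q i = if (L.get i) v = 0 then 0 else mono a (decr v (L.get i)) := by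
      simp only [hq]
    by_cases h : (L.get i) v = 0
    · rw [hqi, if_pos h, if_pos h, mul_zero, sub_zero]
    · rw [hqi, if_neg h, if_neg h]
      set c := L.get i
      have h1 : a v * mono a (decr v c) = mono a c := by
        rw [decr, mono_update, ← mul_assoc, mono_split v c]
        congr 2
        rw [← pow_succ']
        congr 1
        omega
      rw [h1, sub_self]
  have hterm2 : ∀ j, pgen a u j - (if j = v then a v * w else 0)
      = if j = v then 0 else pgen a u j := by
    intro j
    by_cases h : j = v
    · subst h
      rw [if_pos rfl, if_pos rfl, hw]
      by_cases h2 : u j = 0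
      · simp [pgen, h2]
      · rw [if_neg h2, pgen, if_neg h2, sub_eq_zero, ← pow_succ']
        congr 1
        omega
    · simp [h]
  have hzmem : a v * z ∈ JI a LB u0 := by
    rw [keyz]
    refine Ideal.add_mem _ (Ideal.sum_mem _ fun i _ => ?_) (Ideal.sum_mem _ fun j _ => ?_)
    · rw [hterm1]
      refine Ideal.mul_mem_left _ _ ?_
      by_cases h : (L.get i) v = 0
      · rw [if_pos h]
        refine mono_mem (List.mem_filter.2 ⟨?_, by simp [h]⟩)
        rw [List.get_eq_getElem]; exact L.getElem_mem _
      · rw [if_neg h]; exact Ideal.zero_mem _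
    · rw [hterm2]
      refine Ideal.mul_mem_left _ _ ?_
      by_cases h : j = v
      · rw [if_pos h]; exact Ideal.zero_mem _
      · rw [if_neg h, ← pgen_update_ne h 0]
        exact pgen_mem _ _ _
  have hdc₀ : 1 ≤ deg c₀ := le_trans (by omega) (deg_pos_le c₀ v)
  have hLBdeg : degL LB + deg c₀ ≤ degL L :=
    degL_filter_add hc₀L (by simp [hc₀v])
  have hN1 : 1 ≤ N := by omega
  have hzJI : z ∈ JI a LB u0 := by
    refine (IH (N - 1) (by omega)).1 LB u0 v z (by omega)
      (fun c hc => by simpa using (List.mem_filter.1 hc).2) (by rw [hu0, Function.update_self])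
      hzmem
  have havd : a v ^ (d - 1) * x ∈ JI a (L.map (decr v)) u1 := by
    have hxeq : a v ^ (d - 1) * x = z + (∑ i, r i * q i) + s v * w := by rw [hz]; ring
    rw [hxeq]
    refine Ideal.add_mem _ (Ideal.add_mem _ ?_ (Ideal.sum_mem _ fun i _ => ?_)) ?_
    · refine (JI_le (fun c hc => ?_) (fun j hj => ?_)) hzJI
      · have hcL : c ∈ L := List.mem_of_mem_filter hc
        have hcv : c v = 0 := by simpa using (List.mem_filter.1 hc).2
        have hcr : decr v c = c := by
          rw [decr, show c v - 1 = c v by omega, Function.update_eq_self]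
        rw [← hcr]
        exact mono_mem (List.mem_map_of_mem hcL)
      · have hjv : j ≠ v := by
          intro h; rw [h, hu0, Function.update_self] at hj; exact hj rfl
        have h1 : u0 j = u1 j := by rw [hu0, hu1, Function.update_of_ne hjv,
          Function.update_of_ne hjv]
        rw [h1]
        exact pow_mem (by rw [← h1]; exact hj)
    · have hqi : q i = if (L.get i) v = 0 then 0 else mono a (decr v (L.get i)) := by
        simp only [hq]
      rw [hqi]
      refine Ideal.mul_mem_left _ _ ?_
      by_cases h : (L.get i) v = 0
      · rw [if_pos h]; exact Ideal.zero_mem _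
      · rw [if_neg h]
        refine mono_mem (List.mem_map_of_mem ?_)
        rw [List.get_eq_getElem]; exact L.getElem_mem _
    · rw [hw]
      refine Ideal.mul_mem_left _ _ ?_
      by_cases h : u v = 0
      · rw [if_pos h]; exact Ideal.zero_mem _
      · rw [if_neg h]
        have h2 : u1 v = u v - 1 := by rw [hu1, Function.update_self]
        have h3 : u1 v ≠ 0 := by have := huv2 h; omega
        have := pow_mem (a := a) (L := L.map (decr v)) h3
        rwa [h2] at this
  have hrec := (IH (N - 1) (by omega)).2 (L.map (decr v)) u1 v (d - 1) x
    (by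
      have := degL_map_add (f := decr v) (fun c => by have := deg_decr v c; omega)
        hc₀L (by have := deg_decr v c₀; omega)
      omega)
    (fun c' hc' => by
      obtain ⟨c, hc, rfl⟩ := List.mem_map.1 hc'
      have := hcle c hc
      rw [decr, Function.update_self]
      omega)
    (by
      intro h1
      rw [hu1, Function.update_self] at h1 ⊢
      have := hult (by omega)
      omega)
    havd
  have hLL : (L.map (decr v)).map (red v) = L.map (red v) := by
    rw [List.map_map]
    refine List.map_congr_left fun c _ => ?_
    show red v (decr v c) = red v c
    rw [red, decr, Function.update_idem, red]
  have huu : Function.update u1 v (u1 v - (d - 1)) = Function.update u v (u v - d) := by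
    have harith : u v - 1 - (d - 1) = u v - d := by omega
    rw [hu1, Function.update_self, Function.update_idem, harith]
  rwa [hLL, huu] at hrec

lemma St1_step
    (Hsub : ∀ T : Finset (Fin m), ∀ k, k ∉ T → ∀ s : S,
      a k * s ∈ Ideal.span (a '' ↑T) → s ∈ Ideal.span (a '' ↑T))
    (N : ℕ) (IH : ∀ N' < N, St1P a N' ∧ StQP a N') : St1P a N := by
  classical
  intro L u k x hdeg hck huk hx
  by_cases hunit : ∃ c ∈ L, deg c = 0
  · obtain ⟨c, hcL, hc0⟩ := hunit
    have h1 : (1 : S) ∈ JI a L u := by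
      rw [← mono_of_deg_zero (a := a) hc0]; exact mono_mem hcL
    simpa using Ideal.mul_mem_left _ x h1
  by_cases hdrop : ∃ c ∈ L, ∃ j, u j ≠ 0 ∧ u j ≤ c j
  · obtain ⟨c, hcL, j, huj, hujc⟩ := hdrop
    set L' := L.erase c with hL'
    have hperm : List.Perm L (c :: L') := List.perm_cons_erase hcL
    have hJeq : JI a L u = JI a L' u := by
      apply le_antisymm
      · refine JI_le (fun c' hc' => ?_) (fun j' hj' => pow_mem hj')
        by_cases hcc : c' = c
        · subst hcc
          have hsplit : mono a c' = a j ^ u j * (a j ^ (c' j - u j)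
              * mono a (Function.update c' j 0)) := by
            rw [← mul_assoc, ← pow_add, mono_split j c']
            congr 2
            omega
          rw [hsplit]
          exact Ideal.mul_mem_right _ _ (pow_mem huj)
        · exact mono_mem ((List.mem_erase_of_ne hcc).2 hc')
      · exact JI_le (fun c' hc' => mono_mem (List.mem_of_mem_erase hc'))
          (fun j' hj' => pow_mem hj')
    have hdegL' : deg c + degL L' = degL L := by
      have h2 : (L.map deg).sum = ((c :: L').map deg).sum := (hperm.map deg).sum_eq
      simp only [degL, List.map_cons, List.sum_cons] at h2 ⊢
      omega
    have hdc : 1 ≤ deg c := le_trans (by omega) (deg_pos_le c j)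
    have := (IH (N - 1) (by omega)).1 L' u k x (by omega)
      (fun c' h => hck c' (List.mem_of_mem_erase h)) huk (by rw [← hJeq]; exact hx)
    rw [hJeq]
    exact this
  by_cases hLnil : L = []
  · subst hLnil
    have hnil : JI a ([] : List (Fin m → ℕ)) u = PU a u := by
      rw [JI]
      haveI : IsEmpty (Fin (List.length ([] : List (Fin m → ℕ)))) :=
        ⟨fun i => absurd i.isLt (by simp)⟩
      have h0 : (Set.range (fun i : Fin (List.length ([] : List (Fin m → ℕ))) =>
          mono a (List.get [] i))) = ∅ := Set.range_eq_empty _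
      rw [h0, Ideal.span_empty, bot_sup_eq]
    rw [hnil] at hx ⊢
    exact powP Hsub (deg u) u le_rfl k huk x hx
  -- main case
  push_neg at hunit hdrop
  obtain ⟨c₀, hc₀⟩ := List.exists_mem_of_ne_nil L hLnil
  have hc₀d : deg c₀ ≠ 0 := hunit c₀ hc₀
  have hv : ∃ v, c₀ v ≠ 0 := by
    by_contra h
    push_neg at h
    exact hc₀d (deg_eq_zero_iff.2 h)
  obtain ⟨v, hc₀v⟩ := hv
  have hkv : k ≠ v := fun h => hc₀v (by rw [← h]; exact hck c₀ hc₀)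
  set d := maxExp v L with hd
  have hd1 : 1 ≤ d := le_trans (by omega) (le_maxExp hc₀)
  have hdmax : ∀ c ∈ L, c v ≤ d := fun c hc => le_maxExp hc
  obtain ⟨c', hc'L, hc'v⟩ := maxExp_attained (v := v) (L := L) (by omega)
  have hdu : u v ≠ 0 → d < u v := by
    intro h
    have := hdrop c' hc'L v
    omega
  set L2 := L.filter (fun c => decide (c v < d)) with hL2
  set u2 := Function.update u v d with hu2
  have hsub1 : JI a L u ≤ JI a L2 u2 := by
    refine JI_le (fun c hc => ?_) (fun j hj => ?_)
    · by_cases h : c v < d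
      · exact mono_mem (List.mem_filter.2 ⟨hc, by simp [h]⟩)
      · have hcv : c v = d := by have := hdmax c hc; omega
        rw [mono_split v c, hcv]
        refine Ideal.mul_mem_right _ _ ?_
        have hpm := pow_mem (a := a) (L := L2) (u := u2) (j := v)
          (by rw [hu2, Function.update_self]; omega)
        rwa [hu2, Function.update_self] at hpm
    · by_cases hjv : j = v
      · subst hjv
        have hdlt : d < u j := hdu hj
        have hsplit : a j ^ u j = a j ^ d * a j ^ (u j - d) := by
          rw [← pow_add]; congr 1; omega
        rw [hsplit]
        refine Ideal.mul_mem_right _ _ ?_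
        have hpm := pow_mem (a := a) (L := L2) (u := u2) (j := j)
          (by rw [hu2, Function.update_self]; omega)
        rwa [hu2, Function.update_self] at hpm
      · have h1 : u2 j = u j := by rw [hu2]; exact Function.update_of_ne hjv _ _
        rw [← h1]
        exact pow_mem (by rw [h1]; exact hj)
  have hfdeg : degL L2 + deg c' ≤ degL L :=
    degL_filter_add hc'L (by simp [hc'v, hd])
  have hdc' : d ≤ deg c' := by rw [hd, ← hc'v]; exact deg_pos_le c' v
  have hx2 : x ∈ JI a L2 u2 :=
    (IH (N - 1) (by omega)).1 L2 u2 k x (by omega)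
      (fun c h => hck c (List.mem_of_mem_filter h))
      (by rw [hu2, Function.update_of_ne hkv]; exact huk)
      (hsub1 hx)
  obtain ⟨r, s, hxrep⟩ := mem_JI_iff.1 hx2
  set y := (∑ i, r i * mono a (L2.get i))
    + ∑ j ∈ Finset.univ.erase v, s j * pgen a u2 j with hy
  have hpgu2v : pgen a u2 v = a v ^ d := by
    rw [pgen, hu2, Function.update_self, if_neg (by omega)]
  have hxy : x = y + s v * pgen a u2 v := by
    rw [hy, hxrep, ← Finset.add_sum_erase Finset.univ (fun j => s j * pgen a u2 j)
      (Finset.mem_univ v)]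
    ring
  have hymem : y ∈ JI a L u := by
    rw [hy]
    refine Ideal.add_mem _ (Ideal.sum_mem _ fun i _ => Ideal.mul_mem_left _ _ ?_)
      (Ideal.sum_mem _ fun j hj => Ideal.mul_mem_left _ _ ?_)
    · refine mono_mem (List.mem_of_mem_filter (?_ : L2.get i ∈ L2))
      rw [List.get_eq_getElem]; exact L2.getElem_mem _
    · rw [hu2, pgen_update_ne (Finset.ne_of_mem_erase hj)]
      exact pgen_mem _ _ _
  have hav : a v ^ d * (a k * s v) ∈ JI a L u := by
    have h1 : a v ^ d * (a k * s v) = a k * x - a k * y := by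
      rw [hxy, hpgu2v]; ring
    rw [h1]
    exact sub_mem hx (Ideal.mul_mem_left _ _ hymem)
  have hqres := Qpos N IH L u v d (a k * s v) hdeg hdmax hdu hd1 ⟨c₀, hc₀, hc₀v⟩ hav
  set u3 := Function.update u v (u v - d) with hu3
  have hdegmap : degL (L.map (red v)) + 1 ≤ degL L :=
    degL_map_add (f := red v) (fun c => by have := deg_red_add v c; omega) hc₀
      (by have := deg_red_add v c₀; omega)
  have hsv : s v ∈ JI a (L.map (red v)) u3 :=
    (IH (N - 1) (by omega)).1 (L.map (red v)) u3 k (s v) (by omega)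
      (fun c' hcm => by
        obtain ⟨c, hc, rfl⟩ := List.mem_map.1 hcm
        rw [red, Function.update_of_ne hkv]
        exact hck c hc)
      (by rw [hu3, Function.update_of_ne hkv]; exact huk)
      hqres
  have hmul : a v ^ d * s v ∈ JI a L u := by
    obtain ⟨rr, ss, hsvrep⟩ := mem_JI_iff.1 hsv
    rw [hsvrep, mul_add, Finset.mul_sum, Finset.mul_sum]
    refine Ideal.add_mem _ (Ideal.sum_mem _ fun i _ => ?_) (Ideal.sum_mem _ fun j _ => ?_)
    · have hlen : (i : ℕ) < L.length :=
        lt_of_lt_of_le i.isLt (le_of_eq (List.length_map _))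
      obtain ⟨c, hcL, hgi⟩ : ∃ c, c ∈ L ∧ (L.map (red v)).get i = red v c :=
        ⟨L[(i : ℕ)]'hlen, List.getElem_mem _, by rw [List.get_eq_getElem, List.getElem_map]⟩
      have hcvd : c v ≤ d := hdmax c hcL
      have hsplit : a v ^ (d - c v) * mono a c = a v ^ d * mono a (red v c) := by
        rw [mono_split v c, red, ← mul_assoc, ← pow_add]
        congr 2
        omega
      rw [hgi, show a v ^ d * (rr i * mono a (red v c))
          = rr i * (a v ^ (d - c v) * mono a c) from by rw [hsplit]; ring]
      exact Ideal.mul_mem_left _ _ (Ideal.mul_mem_left _ _ (mono_mem hcL))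
    · by_cases hjv : j = v
      · subst hjv
        by_cases huv : u j = 0
        · have h0 : pgen a u3 j = 0 := by
            rw [pgen, if_pos (by rw [hu3, Function.update_self]; omega)]
          rw [h0, mul_zero, mul_zero]
          exact Ideal.zero_mem _
        · have hdlt : d < u j := hdu huv
          have h1 : pgen a u3 j = a j ^ (u j - d) := by
            rw [pgen, hu3, Function.update_self, if_neg (by omega)]
          rw [h1, show a j ^ d * (ss j * a j ^ (u j - d))
              = ss j * a j ^ (d + (u j - d)) from by rw [pow_add]; ring,
            show d + (u j - d) = u j from by omega]
          exact Ideal.mul_mem_left _ _ (pow_mem huv)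
      · have h1 : pgen a u3 j = pgen a u j := by rw [hu3]; exact pgen_update_ne hjv _
        rw [h1]
        exact Ideal.mul_mem_left _ _ (Ideal.mul_mem_left _ _ (pgen_mem _ _ _))
  rw [hxy, hpgu2v]
  exact Ideal.add_mem _ hymem
    (by rw [show s v * a v ^ d = a v ^ d * s v from mul_comm _ _]; exact hmul)

lemma StQ_step (N : ℕ) (IH : ∀ N' < N, St1P a N' ∧ StQP a N') (st1 : St1P a N) :
    StQP a N := by
  classical
  intro L u v d x hdeg hcle hult hx
  by_cases hA : ∃ c ∈ L, c v ≠ 0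
  · have hd1 : 1 ≤ d := by
      obtain ⟨c, hc, hcv⟩ := hA
      have := hcle c hc
      omega
    exact Qpos N IH L u v d x hdeg hcle hult hd1 hA hx
  · push_neg at hA
    have hredid : ∀ c ∈ L, red v c = c := by
      intro c hc
      rw [red, show (0 : ℕ) = c v from (hA c hc).symm, Function.update_eq_self]
    have hconv : ∀ u' : Fin m → ℕ, JI a L u' ≤ JI a (L.map (red v)) u' := by
      intro u'
      refine JI_le (fun c hc => ?_) (fun j hj => pow_mem hj)
      rw [← hredid c hc]
      exact mono_mem (List.mem_map_of_mem hc)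
    have inner : ∀ (d' : ℕ) (u' : Fin m → ℕ) (x' : S), (u' v ≠ 0 → d' < u' v) →
        a v ^ d' * x' ∈ JI a L u' →
        x' ∈ JI a (L.map (red v)) (Function.update u' v (u' v - d')) := by
      intro d'
      induction d' with
      | zero =>
        intro u' x' hult' hx'
        have h1 : Function.update u' v (u' v - 0) = u' := by
          rw [Nat.sub_zero]
          exact Function.update_eq_self v u'
        rw [h1]
        exact hconv u' (by simpa using hx')
      | succ d' ihd =>
        intro u' x' hult' hx'
        by_cases huv : u' v = 0
        · have hstep : ∀ y : S, a v * y ∈ JI a L u' → y ∈ JI a L u' :=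
            fun y hy => st1 L u' v y hdeg hA huv hy
          have hiter : ∀ (e : ℕ) (y : S), a v ^ e * y ∈ JI a L u' → y ∈ JI a L u' := by
            intro e
            induction e with
            | zero => intro y hy; simpa using hy
            | succ e ihe =>
              intro y hy
              refine hstep y (ihe (a v * y) ?_)
              rw [show a v ^ e * (a v * y) = a v ^ (e + 1) * y from by rw [pow_succ]; ring]
              exact hy
          have hxJ : x' ∈ JI a L u' := hiter (d' + 1) x' hx'
          have h1 : Function.update u' v (u' v - (d' + 1)) = u' := by
            rw [show u' v - (d' + 1) = u' v from by omega]
            exact Function.update_eq_self v u'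
          rw [h1]
          exact hconv u' hxJ
        · have hd1u : d' + 1 < u' v := hult' huv
          obtain ⟨r, s, hrep⟩ := mem_JI_iff.1 hx'
          set u0 := Function.update u' v 0 with hu0
          set u1 := Function.update u' v (u' v - 1) with hu1
          set z := a v ^ d' * x' - s v * a v ^ (u' v - 1) with hz
          have hpg : pgen a u' v = a v ^ u' v := by rw [pgen, if_neg huv]
          have hps : a v * a v ^ (u' v - 1) = a v ^ u' v := by
            rw [← pow_succ']; congr 1; omega
          have hps2 : a v * a v ^ d' = a v ^ (d' + 1) := by rw [← pow_succ']
          have keyz : a v * z = (∑ i, r i * mono a (L.get i))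
              + ∑ j, s j * pgen a u0 j := by
            have h2 : ∑ j, s j * pgen a u0 j
                = (∑ j, s j * pgen a u' j) - s v * pgen a u' v := by
              rw [← Finset.add_sum_erase Finset.univ (fun j => s j * pgen a u0 j)
                (Finset.mem_univ v),
                ← Finset.add_sum_erase Finset.univ (fun j => s j * pgen a u' j)
                (Finset.mem_univ v)]
              have hv0 : pgen a u0 v = 0 := by
                rw [pgen, if_pos (by rw [hu0, Function.update_self])]
              have hsum : ∑ j ∈ Finset.univ.erase v, s j * pgen a u0 j
                  = ∑ j ∈ Finset.univ.erase v, s j * pgen a u' j :=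
                Finset.sum_congr rfl fun j hj => by
                  rw [hu0, pgen_update_ne (Finset.ne_of_mem_erase hj)]
              rw [hv0, hsum]
              ring
            rw [h2, hpg, ← hps]
            rw [← hps2] at hrep
            rw [hz]
            linear_combination hrep
          have hzmem : z ∈ JI a L u0 :=
            st1 L u0 v z hdeg hA (by rw [hu0, Function.update_self])
              (by rw [keyz]; exact mem_JI_iff.2 ⟨r, s, rfl⟩)
          have havd : a v ^ d' * x' ∈ JI a L u1 := by
            have hxe : a v ^ d' * x' = z + s v * a v ^ (u' v - 1) := by rw [hz]; ring
            rw [hxe]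
            refine add_mem ?_ (Ideal.mul_mem_left _ _ ?_)
            · refine (JI_le (fun c hc => mono_mem hc) (fun j hj => ?_)) hzmem
              have hjv : j ≠ v := fun h => by
                rw [h, hu0, Function.update_self] at hj; exact hj rfl
              have h1 : u0 j = u1 j := by
                rw [hu0, hu1, Function.update_of_ne hjv, Function.update_of_ne hjv]
              rw [h1]
              exact pow_mem (by rw [← h1]; exact hj)
            · have h3 : u1 v = u' v - 1 := by rw [hu1, Function.update_self]
              have h4 : u1 v ≠ 0 := by omega
              have := pow_mem (a := a) (L := L) h4
              rwa [h3] at this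
          have hres := ihd u1 x' (by
              intro h1
              rw [hu1, Function.update_self] at h1 ⊢
              omega) havd
          have huu : Function.update u1 v (u1 v - d')
              = Function.update u' v (u' v - (d' + 1)) := by
            have harith : u' v - 1 - d' = u' v - (d' + 1) := by omega
            rw [hu1, Function.update_self, Function.update_idem, harith]
          rwa [huu] at hres
    exact inner d u x hult hx

lemma mainInd
    (Hsub : ∀ T : Finset (Fin m), ∀ k, k ∉ T → ∀ s : S,
      a k * s ∈ Ideal.span (a '' ↑T) → s ∈ Ideal.span (a '' ↑T)) :
    ∀ N : ℕ, St1P a N ∧ StQP a N := by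
  intro N
  induction N using Nat.strong_induction_on with
  | _ N IH =>
    have st1 := St1_step Hsub N IH
    exact ⟨st1, StQ_step N IH st1⟩

end Stmt1Aux

open Stmt1Aux in
/-- If `a₁,…,aₘ` is a permutable regular sequence on a commutative ring `S`
and `J` is generated by monomials in `a_{t+1},…,aₘ`, then
`(J : a₁^{n₁}⋯a_t^{n_t}) = J`. -/
theorem stmt1 {S : Type*} [CommRing S] {m : ℕ} (a : Fin m → S)
    (hreg : ∀ σ : Equiv.Perm (Fin m), ∀ i : Fin m, ∀ s : S,
      a (σ i) * s ∈ Ideal.span {x | ∃ j : Fin m, j < i ∧ x = a (σ j)} →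
      s ∈ Ideal.span {x | ∃ j : Fin m, j < i ∧ x = a (σ j)})
    (t : ℕ) (ht1 : 1 ≤ t) (ht2 : t ≤ m - 1)
    (J : Ideal S)
    (hJ : ∃ G : Set S,
      (∀ g ∈ G, ∃ c : Fin m → ℕ, (∀ j : Fin m, (j : ℕ) < t → c j = 0) ∧
        g = ∏ j, a j ^ c j) ∧ J = Ideal.span G)
    (nn : Fin m → ℕ) :
    Submodule.colon J
      (Ideal.span {∏ j ∈ Finset.univ.filter (fun j : Fin m => (j : ℕ) < t), a j ^ nn j})
      = J := by
  classical
  obtain ⟨G, hG, hJG⟩ := hJ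
  have Hsub := hsub_of_hreg hreg
  have hsingle : ∀ (k : Fin m), (k : ℕ) < t → ∀ x : S, x * a k ∈ J → x ∈ J := by
    intro k hkt x hx
    rw [hJG] at hx ⊢
    obtain ⟨T, hTG, hxT⟩ := Submodule.mem_span_finite_of_mem_span hx
    have hch : ∀ g : T, ∃ c : Fin m → ℕ,
        (∀ j : Fin m, (j : ℕ) < t → c j = 0) ∧ (g : S) = mono a c :=
      fun g => hG g (hTG g.2)
    choose f hf1 hf2 using hch
    set L : List (Fin m → ℕ) := T.attach.toList.map f with hL
    have hmem : a k * x ∈ JI a L (fun _ => 0) := by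
      rw [mul_comm]
      refine Ideal.span_le.2 ?_ hxT
      intro g hg
      have hgT : g ∈ T := hg
      have : g = mono a (f ⟨g, hgT⟩) := hf2 ⟨g, hgT⟩
      rw [this]
      refine SetLike.mem_coe.2 (mono_mem (List.mem_map_of_mem ?_))
      rw [Finset.mem_toList]
      exact Finset.mem_attach _ _
    have hres := (mainInd Hsub (degL L)).1 L (fun _ => 0) k x le_rfl
      (fun c hc => by
        obtain ⟨g, hgm, rfl⟩ := List.mem_map.1 hc
        exact hf1 g k hkt)
      rfl hmem
    refine (JI_le (fun c hc => ?_) (fun j hj => absurd rfl hj)) hres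
    obtain ⟨g, hgm, rfl⟩ := List.mem_map.1 hc
    rw [← hf2 g]
    exact Ideal.subset_span (hTG g.2)
  have hpow : ∀ (k : Fin m), (k : ℕ) < t → ∀ (e : ℕ) (x : S), x * a k ^ e ∈ J → x ∈ J := by
    intro k hkt e
    induction e with
    | zero => intro x hx; simpa using hx
    | succ e ih =>
      intro x hx
      rw [pow_succ, ← mul_assoc] at hx
      exact ih x (hsingle k hkt _ hx)
  have hprod : ∀ s : Finset (Fin m), (∀ j ∈ s, (j : ℕ) < t) → ∀ x : S,
      x * (∏ j ∈ s, a j ^ nn j) ∈ J → x ∈ J := by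
    intro s
    induction s using Finset.induction_on with
    | empty => intro _ x hx; simpa using hx
    | @insert j s hns ih =>
      intro hall x hx
      rw [Finset.prod_insert hns,
        show x * (a j ^ nn j * ∏ i ∈ s, a i ^ nn i)
          = (x * ∏ i ∈ s, a i ^ nn i) * a j ^ nn j from by ring] at hx
      exact ih (fun i hi => hall i (Finset.mem_insert_of_mem hi)) x
        (hpow j (hall j (Finset.mem_insert_self j s)) (nn j) _ hx)
  apply le_antisymm
  · intro x hx
    have hb := Ideal.mem_colon_span_singleton.1 hx
    exact hprod _ (fun j hj => (Finset.mem_filter.1 hj).2) x hb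
  · intro x hx
    exact Ideal.mem_colon_span_singleton.2 (Ideal.mul_mem_right _ _ hx)
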